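/- If f, g : Δ = [a,b]×[c,d] → [0,∞) are convex on the co-ordinates on Δ (a < b, c < d) with f·g integrable, then (1/((b-a)(d-c))) ∫_a^b ∫_c^d f(x,y)g(x,y) dy dx ≤ (1/9)L + (1/18)M + (1/36)N, where L = f(a,c)g(a,c)+f(b,c)g(b,c)+f(a,d)g(a,d)+f(b,d)g(b,d), M = f(a,c)g(a,d)+f(a,d)g(a,c)+f(b,c)g(b,d)+f(b,d)g(b,c)+f(b,c)g(a,c)+f(b,d)g(a,d)+f(a,c)g(b,c)+f(a,d)g(b,d), and N = f(b,c)g(a,d)+f(b,d)g(a,c)+f(a,c)g(b,d)+f(a,d)g(b,c). -/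

import Mathlib

open MeasureTheory Set


noncomputable def cornerComb (a b c d : ℝ) (f : ℝ → ℝ → ℝ) (x y : ℝ) : ℝ :=
  ((b-x)/(b-a))*((d-y)/(d-c))*f a c + ((b-x)/(b-a))*((y-c)/(d-c))*f a d
  + ((x-a)/(b-a))*((d-y)/(d-c))*f b c + ((x-a)/(b-a))*((y-c)/(d-c))*f b d


lemma conv1 {a b x : ℝ} (hab : a < b) (φ : ℝ → ℝ) (hφ : ConvexOn ℝ (Set.Icc a b) φ)
    (hx : x ∈ Set.Icc a b) :
    φ x ≤ ((b-x)/(b-a)) * φ a + ((x-a)/(b-a)) * φ b := by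
  have hba : (0:ℝ) < b - a := by linarith
  have h1 : (0:ℝ) ≤ (b-x)/(b-a) := div_nonneg (by linarith [hx.2]) hba.le
  have h2 : (0:ℝ) ≤ (x-a)/(b-a) := div_nonneg (by linarith [hx.1]) hba.le
  have h3 : (b-x)/(b-a) + (x-a)/(b-a) = 1 := by
    rw [← add_div]
    field_simp
    ring
  have h4 : ((b-x)/(b-a)) • a + ((x-a)/(b-a)) • b = x := by
    simp only [smul_eq_mul]
    field_simp
    ring
  have := hφ.2 (Set.left_mem_Icc.2 hab.le) (Set.right_mem_Icc.2 hab.le) h1 h2 h3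
  rw [h4] at this
  simpa [smul_eq_mul] using this

lemma corner_bound {a b c d : ℝ} (hab : a < b) (hcd : c < d) (f : ℝ → ℝ → ℝ)
    (hfx : ∀ y ∈ Set.Icc c d, ConvexOn ℝ (Set.Icc a b) (fun x => f x y))
    (hfy : ∀ x ∈ Set.Icc a b, ConvexOn ℝ (Set.Icc c d) (fun y => f x y))
    {x y : ℝ} (hx : x ∈ Set.Icc a b) (hy : y ∈ Set.Icc c d) :
    f x y ≤ cornerComb a b c d f x y := by
  have hba : (0:ℝ) < b - a := by linarith
  have hu : (0:ℝ) ≤ (b-x)/(b-a) := div_nonneg (by linarith [hx.2]) hba.le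
  have hs : (0:ℝ) ≤ (x-a)/(b-a) := div_nonneg (by linarith [hx.1]) hba.le
  have h1 : f x y ≤ ((b-x)/(b-a)) * f a y + ((x-a)/(b-a)) * f b y :=
    conv1 hab (fun x => f x y) (hfx y hy) hx
  have h2 : f a y ≤ ((d-y)/(d-c)) * f a c + ((y-c)/(d-c)) * f a d :=
    conv1 hcd (fun y => f a y) (hfy a (Set.left_mem_Icc.2 hab.le)) hy
  have h3 : f b y ≤ ((d-y)/(d-c)) * f b c + ((y-c)/(d-c)) * f b d :=
    conv1 hcd (fun y => f b y) (hfy b (Set.right_mem_Icc.2 hab.le)) hy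
  have h4 : ((b-x)/(b-a)) * f a y + ((x-a)/(b-a)) * f b y
      ≤ ((b-x)/(b-a)) * (((d-y)/(d-c)) * f a c + ((y-c)/(d-c)) * f a d)
        + ((x-a)/(b-a)) * (((d-y)/(d-c)) * f b c + ((y-c)/(d-c)) * f b d) :=
    add_le_add (mul_le_mul_of_nonneg_left h2 hu) (mul_le_mul_of_nonneg_left h3 hs)
  refine h1.trans (h4.trans_eq ?_)
  unfold cornerComb
  ring
lemma int_poly2 (a b p q r : ℝ) :
    ∫ x in a..b, (p + q * x + r * x ^ 2)
      = p * (b - a) + q * (b ^ 2 - a ^ 2) / 2 + r * (b ^ 3 - a ^ 3) / 3 := by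
  have h1 : IntervalIntegrable (fun _ : ℝ => p) volume a b := intervalIntegrable_const
  have h2 : IntervalIntegrable (fun x : ℝ => q * x) volume a b :=
    (continuous_const.mul continuous_id).intervalIntegrable a b
  have h3 : IntervalIntegrable (fun x : ℝ => r * x ^ 2) volume a b :=
    (continuous_const.mul (continuous_pow 2)).intervalIntegrable a b
  rw [intervalIntegral.integral_add (h1.add h2) h3, intervalIntegral.integral_add h1 h2,
    intervalIntegral.integral_const, intervalIntegral.integral_const_mul,
    intervalIntegral.integral_const_mul, integral_id, integral_pow]
  simp only [smul_eq_mul]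
  ring

lemma quad_int (a b : ℝ) (hne : b - a ≠ 0) (e1 e2 e3 e4 : ℝ) :
    ∫ x in a..b, ((((b-x)/(b-a)) * e1 + ((x-a)/(b-a)) * e2) *
        (((b-x)/(b-a)) * e3 + ((x-a)/(b-a)) * e4))
      = (b-a) * (e1*e3/3 + (e1*e4 + e2*e3)/6 + e2*e4/3) := by
  have h1 : EqOn (fun x => (((b-x)/(b-a)) * e1 + ((x-a)/(b-a)) * e2) *
        (((b-x)/(b-a)) * e3 + ((x-a)/(b-a)) * e4))
      (fun x => ((b^2*(e1*e3) - a*b*(e1*e4+e2*e3) + a^2*(e2*e4))/(b-a)^2)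
        + ((-2*b*(e1*e3) + (a+b)*(e1*e4+e2*e3) - 2*a*(e2*e4))/(b-a)^2) * x
        + (((e1*e3) - (e1*e4+e2*e3) + (e2*e4))/(b-a)^2) * x ^ 2) (Set.uIcc a b) := by
    intro x _
    field_simp
    ring
  rw [intervalIntegral.integral_congr h1, int_poly2]
  field_simp
  ring

lemma cornerComb_integral (a b c d : ℝ) (hab : a < b) (hcd : c < d) (f g : ℝ → ℝ → ℝ) :
    ∫ x in a..b, ∫ y in c..d, cornerComb a b c d f x y * cornerComb a b c d g x y
      = (b-a)*(d-c) *
        ((1 / 9) * (f a c * g a c + f b c * g b c + f a d * g a d + f b d * g b d) +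
        (1 / 18) * (f a c * g a d + f a d * g a c + f b c * g b d + f b d * g b c +
          f b c * g a c + f b d * g a d + f a c * g b c + f a d * g b d) +
        (1 / 36) * (f b c * g a d + f b d * g a c + f a c * g b d + f a d * g b c)) := by
  have hba : b - a ≠ 0 := sub_ne_zero.2 hab.ne'
  have hdc : d - c ≠ 0 := sub_ne_zero.2 hcd.ne'
  have hinner : ∀ x : ℝ,
      (∫ y in c..d, cornerComb a b c d f x y * cornerComb a b c d g x y)
      = (d-c) * (((((b-x)/(b-a)) * f a c + ((x-a)/(b-a)) * f b c) *
            (((b-x)/(b-a)) * g a c + ((x-a)/(b-a)) * g b c))/3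
        + ((((b-x)/(b-a)) * f a c + ((x-a)/(b-a)) * f b c) *
            (((b-x)/(b-a)) * g a d + ((x-a)/(b-a)) * g b d)
          + (((b-x)/(b-a)) * f a d + ((x-a)/(b-a)) * f b d) *
            (((b-x)/(b-a)) * g a c + ((x-a)/(b-a)) * g b c))/6
        + ((((b-x)/(b-a)) * f a d + ((x-a)/(b-a)) * f b d) *
            (((b-x)/(b-a)) * g a d + ((x-a)/(b-a)) * g b d))/3) := by
    intro x
    have hfun : (fun y => cornerComb a b c d f x y * cornerComb a b c d g x y)
        = fun y => ((((d-y)/(d-c)) * (((b-x)/(b-a)) * f a c + ((x-a)/(b-a)) * f b c)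
            + ((y-c)/(d-c)) * (((b-x)/(b-a)) * f a d + ((x-a)/(b-a)) * f b d)) *
          (((d-y)/(d-c)) * (((b-x)/(b-a)) * g a c + ((x-a)/(b-a)) * g b c)
            + ((y-c)/(d-c)) * (((b-x)/(b-a)) * g a d + ((x-a)/(b-a)) * g b d))) := by
      funext y
      unfold cornerComb
      ring
    rw [hfun, quad_int c d hdc]
  rw [intervalIntegral.integral_congr (fun x _ => hinner x),
    intervalIntegral.integral_const_mul]
  have hp : IntervalIntegrable (fun x => (((b-x)/(b-a)) * f a c + ((x-a)/(b-a)) * f b c) *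
      (((b-x)/(b-a)) * g a c + ((x-a)/(b-a)) * g b c)) volume a b :=
    (by fun_prop : Continuous _).intervalIntegrable a b
  have hq : IntervalIntegrable (fun x => (((b-x)/(b-a)) * f a c + ((x-a)/(b-a)) * f b c) *
      (((b-x)/(b-a)) * g a d + ((x-a)/(b-a)) * g b d)) volume a b :=
    (by fun_prop : Continuous _).intervalIntegrable a b
  have hr : IntervalIntegrable (fun x => (((b-x)/(b-a)) * f a d + ((x-a)/(b-a)) * f b d) *
      (((b-x)/(b-a)) * g a c + ((x-a)/(b-a)) * g b c)) volume a b :=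
    (by fun_prop : Continuous _).intervalIntegrable a b
  have ht : IntervalIntegrable (fun x => (((b-x)/(b-a)) * f a d + ((x-a)/(b-a)) * f b d) *
      (((b-x)/(b-a)) * g a d + ((x-a)/(b-a)) * g b d)) volume a b :=
    (by fun_prop : Continuous _).intervalIntegrable a b
  rw [intervalIntegral.integral_add ((hp.div_const 3).add ((hq.add hr).div_const 6))
      (ht.div_const 3),
    intervalIntegral.integral_add (hp.div_const 3) ((hq.add hr).div_const 6),
    intervalIntegral.integral_div, intervalIntegral.integral_div, intervalIntegral.integral_div,
    intervalIntegral.integral_add hq hr,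
    quad_int a b hba (f a c) (f b c) (g a c) (g b c),
    quad_int a b hba (f a c) (f b c) (g a d) (g b d),
    quad_int a b hba (f a d) (f b d) (g a c) (g b c),
    quad_int a b hba (f a d) (f b d) (g a d) (g b d)]
  ring

theorem product_hadamard_coordinates
    (a b c d : ℝ) (hab : a < b) (hcd : c < d) (f g : ℝ → ℝ → ℝ)
    (hf0 : ∀ x ∈ Set.Icc a b, ∀ y ∈ Set.Icc c d, 0 ≤ f x y)
    (hg0 : ∀ x ∈ Set.Icc a b, ∀ y ∈ Set.Icc c d, 0 ≤ g x y)
    (hfx : ∀ y ∈ Set.Icc c d, ConvexOn ℝ (Set.Icc a b) (fun x => f x y))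
    (hfy : ∀ x ∈ Set.Icc a b, ConvexOn ℝ (Set.Icc c d) (fun y => f x y))
    (hgx : ∀ y ∈ Set.Icc c d, ConvexOn ℝ (Set.Icc a b) (fun x => g x y))
    (hgy : ∀ x ∈ Set.Icc a b, ConvexOn ℝ (Set.Icc c d) (fun y => g x y))
    (hint : IntegrableOn (fun p : ℝ × ℝ => f p.1 p.2 * g p.1 p.2)
      (Set.Icc a b ×ˢ Set.Icc c d) volume) :
    (1 / ((b - a) * (d - c))) * ∫ x in a..b, ∫ y in c..d, f x y * g x y ≤
      (1 / 9) * (f a c * g a c + f b c * g b c + f a d * g a d + f b d * g b d) +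
      (1 / 18) * (f a c * g a d + f a d * g a c + f b c * g b d + f b d * g b c +
        f b c * g a c + f b d * g a d + f a c * g b c + f a d * g b d) +
      (1 / 36) * (f b c * g a d + f b d * g a c + f a c * g b d + f a d * g b c) := by
  have hba : (0:ℝ) < b - a := by linarith
  have hdc : (0:ℝ) < d - c := by linarith
  set μ := volume.restrict (Set.Ioc a b) with hμ
  set ν := volume.restrict (Set.Ioc c d) with hν
  have hrest : (volume : Measure (ℝ × ℝ)).restrict (Set.Ioc a b ×ˢ Set.Ioc c d) = μ.prod ν := by
    rw [Measure.volume_eq_prod, Measure.prod_restrict]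
  have hsub : Set.Ioc a b ×ˢ Set.Ioc c d ⊆ Set.Icc a b ×ˢ Set.Icc c d :=
    Set.prod_mono Set.Ioc_subset_Icc_self Set.Ioc_subset_Icc_self
  have hI : Integrable (fun p : ℝ × ℝ => f p.1 p.2 * g p.1 p.2) (μ.prod ν) := by
    rw [← hrest]
    exact hint.mono_set hsub
  have hFc : Continuous (fun p : ℝ × ℝ =>
      cornerComb a b c d f p.1 p.2 * cornerComb a b c d g p.1 p.2) := by
    unfold cornerComb
    fun_prop
  have hIF : Integrable (fun p : ℝ × ℝ =>
      cornerComb a b c d f p.1 p.2 * cornerComb a b c d g p.1 p.2) (μ.prod ν) := by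
    rw [← hrest]
    exact (hFc.continuousOn.integrableOn_compact (isCompact_Icc.prod isCompact_Icc)).mono_set hsub
  have hbd : ∀ x ∈ Set.Icc a b, ∀ y ∈ Set.Icc c d,
      f x y * g x y ≤ cornerComb a b c d f x y * cornerComb a b c d g x y := by
    intro x hx y hy
    have hf1 := corner_bound hab hcd f hfx hfy hx hy
    have hg1 := corner_bound hab hcd g hgx hgy hx hy
    exact mul_le_mul hf1 hg1 (hg0 x hx y hy) ((hf0 x hx y hy).trans hf1)
  have hkey : (∫ x, (∫ y, f x y * g x y ∂ν) ∂μ)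
      ≤ ∫ x, (∫ y, cornerComb a b c d f x y * cornerComb a b c d g x y ∂ν) ∂μ := by
    refine integral_mono_ae hI.integral_prod_left hIF.integral_prod_left ?_
    filter_upwards [hI.prod_right_ae, ae_restrict_mem measurableSet_Ioc] with x hix hx
    refine integral_mono_ae hix ?_ ?_
    · have hc : Continuous (fun y => cornerComb a b c d f x y * cornerComb a b c d g x y) := by
        unfold cornerComb
        fun_prop
      exact (hc.continuousOn.integrableOn_compact isCompact_Icc).mono_set Set.Ioc_subset_Icc_self
    · filter_upwards [ae_restrict_mem measurableSet_Ioc] with y hy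
      exact hbd x (Set.Ioc_subset_Icc_self hx) y (Set.Ioc_subset_Icc_self hy)
  have hLeq : (∫ x in a..b, ∫ y in c..d, f x y * g x y)
      = ∫ x, (∫ y, f x y * g x y ∂ν) ∂μ := by
    simp only [intervalIntegral.integral_of_le hab.le, intervalIntegral.integral_of_le hcd.le]
    rfl
  have hReq : (∫ x in a..b, ∫ y in c..d, cornerComb a b c d f x y * cornerComb a b c d g x y)
      = ∫ x, (∫ y, cornerComb a b c d f x y * cornerComb a b c d g x y ∂ν) ∂μ := by
    simp only [intervalIntegral.integral_of_le hab.le, intervalIntegral.integral_of_le hcd.le]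
    rfl
  have hfinal : (∫ x in a..b, ∫ y in c..d, f x y * g x y) ≤ (b-a)*(d-c) *
      ((1 / 9) * (f a c * g a c + f b c * g b c + f a d * g a d + f b d * g b d) +
      (1 / 18) * (f a c * g a d + f a d * g a c + f b c * g b d + f b d * g b c +
        f b c * g a c + f b d * g a d + f a c * g b c + f a d * g b d) +
      (1 / 36) * (f b c * g a d + f b d * g a c + f a c * g b d + f a d * g b c)) := by
    rw [hLeq, ← cornerComb_integral a b c d hab hcd f g, hReq]
    exact hkey
  have hpos : (0:ℝ) < (b - a) * (d - c) := mul_pos hba hdc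
  have h1 := mul_le_mul_of_nonneg_left hfinal (le_of_lt (by positivity :
      (0:ℝ) < 1 / ((b - a) * (d - c))))
  refine h1.trans_eq ?_
  field_simp
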